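/- Let D be a balanced bipartite digraph with colour classes X and Y, each of cardinality a. If for every pair of vertices u, v lying in opposite colour classes with uv not an arc of D we have d^+(u) + d^-(v) ≥ a, then D contains a complete matching from X to Y (i.e., an injective function f : X → Y such that x f(x) is an arc of D for every x in X). -/

import Mathlib

open Finset

/-- Out-degree of a vertex in the digraph with arc relation `A`. -/
def outDeg {V : Type*} [Fintype V] (A : V → V → Prop) [DecidableRel A] (v : V) : ℕ :=
  (Finset.univ.filter (fun w => A v w)).card

/-- In-degree of a vertex. -/
def inDeg {V : Type*} [Fintype V] (A : V → V → Prop) [DecidableRel A] (v : V) : ℕ :=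
  (Finset.univ.filter (fun w => A w v)).card

/-- Number of out-neighbours of `v` lying in the set `S`. -/
def outDegOn {V : Type*} (A : V → V → Prop) [DecidableRel A] (S : Finset V) (v : V) : ℕ :=
  (S.filter (fun w => A v w)).card

/-- Number of in-neighbours of `v` lying in the set `S`. -/
def inDegOn {V : Type*} (A : V → V → Prop) [DecidableRel A] (S : Finset V) (v : V) : ℕ :=
  (S.filter (fun w => A w v)).card

/-- `D = (V, A)` is bipartite with colour classes `X`, `Y`. -/
def IsBipartite {V : Type*} (A : V → V → Prop) (X Y : Finset V) : Prop :=
  Disjoint X Y ∧ (∀ v : V, v ∈ X ∨ v ∈ Y) ∧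
    ∀ u v : V, A u v → (u ∈ X ∧ v ∈ Y) ∨ (u ∈ Y ∧ v ∈ X)

/-- An oriented path on `s` vertices `p 0, p 1, …, p (s-1)`. -/
def IsPath {V : Type*} (A : V → V → Prop) (s : ℕ) (p : ℕ → V) : Prop :=
  Set.InjOn p (Set.Iio s) ∧ ∀ i : ℕ, i + 1 < s → A (p i) (p (i + 1))

/-- An oriented cycle on `s` distinct vertices `p 0, …, p (s-1)` (indices mod `s`). -/
def IsCycle {V : Type*} (A : V → V → Prop) (s : ℕ) (p : ℕ → V) : Prop :=
  Set.InjOn p (Set.Iio s) ∧ ∀ i : ℕ, i < s → A (p i) (p ((i + 1) % s))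

/-- `M` is a matching from `X` to `Y`: an independent set of arcs with origin in `X`
and terminus in `Y`. -/
def IsMatching {V : Type*} (A : V → V → Prop) (X Y : Finset V) (M : Finset (V × V)) : Prop :=
  (∀ e ∈ M, e.1 ∈ X ∧ e.2 ∈ Y ∧ A e.1 e.2) ∧
    ∀ e ∈ M, ∀ e' ∈ M, e ≠ e' → e.1 ≠ e'.1 ∧ e.2 ≠ e'.2

/-- A complete matching from `X` to `Y`: a matching consisting of `|X|` arcs. -/
def IsCompleteMatching {V : Type*} (A : V → V → Prop) (X Y : Finset V)
    (M : Finset (V × V)) : Prop :=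
  IsMatching A X Y M ∧ M.card = X.card

/-- The path `p 0, …, p (s-1)` is compatible with the matching `M`: its arcs lie
alternately in `M` and outside `M`. -/
def PathCompat {V : Type*} (M : Finset (V × V)) (s : ℕ) (p : ℕ → V) : Prop :=
  ∀ i : ℕ, i + 2 < s → ((p i, p (i + 1)) ∈ M ↔ (p (i + 1), p (i + 2)) ∉ M)

/-- The cycle `p 0, …, p (s-1)` is compatible with the matching `M`. -/
def CycleCompat {V : Type*} (M : Finset (V × V)) (s : ℕ) (p : ℕ → V) : Prop :=
  ∀ i : ℕ, i < s →
    ((p i, p ((i + 1) % s)) ∈ M ↔ (p ((i + 1) % s), p ((i + 2) % s)) ∉ M)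

/-- The path `p 0, …, p (s-1)` avoids the vertex set `S`. -/
def Avoids {V : Type*} (s : ℕ) (p : ℕ → V) (S : Finset V) : Prop :=
  ∀ i : ℕ, i < s → p i ∉ S

theorem stmt_0 {V : Type*} [Fintype V] [DecidableEq V]
    (A : V → V → Prop) [DecidableRel A] (X Y : Finset V) (a : ℕ)
    (hbip : IsBipartite A X Y) (hX : X.card = a) (hY : Y.card = a)
    (hdeg : ∀ u v : V, ((u ∈ X ∧ v ∈ Y) ∨ (u ∈ Y ∧ v ∈ X)) → ¬ A u v →
      a ≤ outDeg A u + inDeg A v) :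
    ∃ f : V → V, Set.InjOn f ↑X ∧ ∀ x ∈ X, f x ∈ Y ∧ A x (f x) := by
  obtain ⟨hdisj, _, harc⟩ := hbip
  set t : {x // x ∈ X} → Finset V := fun x => Y.filter (fun y => A x y) with ht
  have hall : ∀ s : Finset {x // x ∈ X}, s.card ≤ (s.biUnion t).card := by
    intro s
    by_contra hlt
    push_neg at hlt
    set N := s.biUnion t with hN
    have hNY : N ⊆ Y := by
      intro y hy
      simp only [hN, Finset.mem_biUnion, ht, Finset.mem_filter] at hy
      obtain ⟨i, _, hy, _⟩ := hy; exact hy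
    have hsne : s.Nonempty := Finset.card_pos.mp (by omega)
    obtain ⟨u, hu⟩ := hsne
    -- s.card ≤ a
    have himg : s.image (Subtype.val) ⊆ X := by
      intro w hw
      simp only [Finset.mem_image] at hw
      obtain ⟨i, _, rfl⟩ := hw; exact i.2
    have himgcard : (s.image (Subtype.val)).card = s.card :=
      Finset.card_image_of_injective _ Subtype.val_injective
    have hsa : s.card ≤ a := by
      rw [← himgcard]; rw [← hX]; exact Finset.card_le_card himg
    -- pick y ∈ Y \ N
    have hNlt : N.card < Y.card := by rw [hY]; omega
    obtain ⟨y, hyY, hyN⟩ : ∃ y ∈ Y, y ∉ N := by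
      by_contra h
      push_neg at h
      exact absurd (Finset.card_le_card h) (not_le.mpr hNlt)
    have hnA : ¬ A (u : V) y := by
      intro h
      apply hyN
      simp only [hN, Finset.mem_biUnion]
      exact ⟨u, hu, by simp [ht, hyY, h]⟩
    have hd := hdeg u y (Or.inl ⟨u.2, hyY⟩) hnA
    -- outDeg bound
    have hout : outDeg A (u : V) ≤ N.card := by
      apply Finset.card_le_card
      intro w hw
      simp only [outDeg, Finset.mem_filter, Finset.mem_univ, true_and] at hw
      have hwY : w ∈ Y := by
        rcases harc _ _ hw with ⟨_, h⟩ | ⟨h, _⟩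
        · exact h
        · exact absurd u.2 (Finset.disjoint_right.mp hdisj h)
      simp only [hN, Finset.mem_biUnion]
      exact ⟨u, hu, by simp [ht, hwY, hw]⟩
    -- inDeg bound
    have hin : inDeg A y ≤ a - s.card := by
      have : (Finset.univ.filter (fun w => A w y)) ⊆ X \ s.image (Subtype.val) := by
        intro w hw
        simp only [Finset.mem_filter, Finset.mem_univ, true_and] at hw
        have hwX : w ∈ X := by
          rcases harc _ _ hw with ⟨h, _⟩ | ⟨_, h⟩
          · exact h
          · exact absurd hyY (Finset.disjoint_left.mp hdisj h)
        refine Finset.mem_sdiff.mpr ⟨hwX, ?_⟩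
        intro hmem
        simp only [Finset.mem_image] at hmem
        obtain ⟨i, hi, rfl⟩ := hmem
        apply hyN
        simp only [hN, Finset.mem_biUnion]
        exact ⟨i, hi, by simp [ht, hyY, hw]⟩
      calc inDeg A y ≤ (X \ s.image (Subtype.val)).card := Finset.card_le_card this
        _ = a - s.card := by rw [Finset.card_sdiff_of_subset himg, himgcard, hX]
    omega
  obtain ⟨f₀, hf₀inj, hf₀mem⟩ :=
    (Finset.all_card_le_biUnion_card_iff_existsInjective' t).mp hall
  refine ⟨fun v => if h : v ∈ X then f₀ ⟨v, h⟩ else v, ?_, ?_⟩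
  · intro x₁ hx₁ x₂ hx₂ heq
    simp only [Finset.coe_mem, dif_pos (by exact hx₁ : x₁ ∈ X),
      dif_pos (by exact hx₂ : x₂ ∈ X)] at heq
    exact congrArg Subtype.val (hf₀inj heq)
  · intro x hx
    simp only [dif_pos hx]
    have := hf₀mem ⟨x, hx⟩
    simp only [ht, Finset.mem_filter] at this
    exact this
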